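/- arXiv:math/9804099 — 2 statements merged into one kernel-verified Lean document; each statement's English description precedes it below -/
import Mathlib

section
/- Fix a > 0 and q = exp(-1/a). Then, as k → +∞ along the positive reals, Z^im_q(k) converges to L := ∫_0^∞ (e^{t²/a}-1)^{-1} · ∏_{j=0}^∞ (1-q^{j+2it})(1-q^{j-2it}) dt, and L is a strictly positive real number; in particular Z^im_q(k) tends to a nonzero limit as Re k → +∞. -/
open Filter Topology MeasureTheory

/-- `qp a w` is `q^w = exp(-w/a)` for `q = exp(-1/a)`. -/
noncomputable def qp (a : ℝ) (w : ℂ) : ℂ := Complex.exp (-w / (a : ℂ))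

/-- The truncated theta function
`δ_k(x;q) = ∏_{j≥0} ((1-q^{j+2x})(1-q^{j-2x}))/((1-q^{j+k+2x})(1-q^{j+k-2x}))`. -/
noncomputable def tdelta (a : ℝ) (k x : ℂ) : ℂ :=
  ∏' j : ℕ, ((1 - qp a ((j : ℂ) + 2 * x)) * (1 - qp a ((j : ℂ) - 2 * x))) /
    ((1 - qp a ((j : ℂ) + k + 2 * x)) * (1 - qp a ((j : ℂ) + k - 2 * x)))

/-- The imaginary q-zeta function `Z^im_q(k) = ∫_0^∞ (e^{t²/a}-1)⁻¹ δ_k(it;q) dt`. -/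
noncomputable def Zim (a : ℝ) (k : ℂ) : ℂ :=
  ∫ t in Set.Ioi (0 : ℝ),
    (Complex.exp ((t : ℂ) ^ 2 / (a : ℂ)) - 1)⁻¹ * tdelta a k (Complex.I * (t : ℂ))


namespace Stmt9Aux


lemma norm_clog_le {z : ℂ} {m M : ℝ} (hm : 0 < m) (h1 : m ≤ ‖z‖) (h2 : ‖z‖ ≤ M) :
    ‖Complex.log z‖ ≤ |Real.log m| + |Real.log M| + Real.pi := by
  have h0 : (0:ℝ) < ‖z‖ := lt_of_lt_of_le hm h1
  have him : |(Complex.log z).im| ≤ Real.pi := by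
    rw [Complex.log_im]; exact Complex.abs_arg_le_pi z
  have hre : |(Complex.log z).re| ≤ |Real.log m| + |Real.log M| := by
    have hre' : (Complex.log z).re = Real.log ‖z‖ := by
      rw [Complex.log_re]
    rw [hre', abs_le]
    have hl1 : Real.log m ≤ Real.log ‖z‖ := Real.log_le_log hm h1
    have hl2 : Real.log ‖z‖ ≤ Real.log M := Real.log_le_log h0 h2
    constructor
    · have := neg_abs_le (Real.log m)
      have := abs_nonneg (Real.log M)
      linarith
    · have := le_abs_self (Real.log M)
      have := abs_nonneg (Real.log m)
      linarith
  calc ‖Complex.log z‖ ≤ |(Complex.log z).re| + |(Complex.log z).im| := by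
        exact Complex.norm_le_abs_re_add_abs_im _
    _ ≤ |Real.log m| + |Real.log M| + Real.pi := by linarith

lemma hasProd_of_logbound {B qq : ℝ} (hq0 : 0 ≤ qq) (hq1 : qq < 1) (hB : 0 ≤ B)
    (f : ℕ → ℂ) (hne : ∀ j, f j ≠ 0)
    (hlog : ∀ j, ‖Complex.log (f j)‖ ≤ B * qq ^ j) :
    Summable (fun j ↦ Complex.log (f j)) ∧ ‖∑' j, Complex.log (f j)‖ ≤ B * (1 - qq)⁻¹ ∧
      HasProd f (Complex.exp (∑' j, Complex.log (f j))) := by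
  have hgeo : Summable (fun j : ℕ ↦ B * qq ^ j) :=
    (summable_geometric_of_lt_one hq0 hq1).mul_left B
  have hnorms : Summable (fun j ↦ ‖Complex.log (f j)‖) :=
    Summable.of_nonneg_of_le (fun j ↦ norm_nonneg _) hlog hgeo
  have hs : Summable (fun j ↦ Complex.log (f j)) := hnorms.of_norm
  refine ⟨hs, ?_, ?_⟩
  · calc ‖∑' j, Complex.log (f j)‖ ≤ ∑' j, ‖Complex.log (f j)‖ := norm_tsum_le_tsum_norm hnorms
      _ ≤ ∑' j : ℕ, B * qq ^ j := Summable.tsum_le_tsum hlog hnorms hgeo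
      _ = B * (1 - qq)⁻¹ := by rw [tsum_mul_left, tsum_geometric_of_lt_one hq0 hq1]
  · have h2 := hs.hasSum.cexp
    have h3 : (Complex.exp ∘ fun j ↦ Complex.log (f j)) = f :=
      funext fun j ↦ Complex.exp_log (hne j)
    rwa [h3] at h2

lemma small_case {C qq : ℝ} (hq0 : 0 ≤ qq) (hq1 : qq < 1) (hC0 : 0 ≤ C) (hC : C ≤ 1/2)
    (f : ℕ → ℂ) (hub : ∀ j, ‖f j - 1‖ ≤ C * qq ^ j) :
    Summable (fun j ↦ Complex.log (f j)) ∧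
      ‖∑' j, Complex.log (f j)‖ ≤ (3/2 * C) * (1 - qq)⁻¹ ∧
      HasProd f (Complex.exp (∑' j, Complex.log (f j))) := by
  have hub' : ∀ j, ‖f j - 1‖ ≤ 1/2 := by
    intro j
    refine (hub j).trans ?_
    have h1 : qq ^ j ≤ 1 := pow_le_one₀ hq0 hq1.le
    nlinarith
  have hne : ∀ j, f j ≠ 0 := by
    intro j h
    have := hub' j
    rw [h] at this
    simp only [zero_sub, norm_neg, norm_one] at this
    norm_num at this
  have hlog : ∀ j, ‖Complex.log (f j)‖ ≤ (3/2 * C) * qq ^ j := by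
    intro j
    have hl := Complex.norm_log_one_add_half_le_self (z := f j - 1) (by
      simpa using hub' j)
    rw [add_sub_cancel] at hl
    calc ‖Complex.log (f j)‖ ≤ 3/2 * ‖f j - 1‖ := hl
      _ ≤ 3/2 * (C * qq ^ j) := by nlinarith [hub j]
      _ = (3/2 * C) * qq ^ j := by ring
  exact hasProd_of_logbound hq0 hq1 (by positivity) f hne hlog

lemma exists_logbound {m C qq : ℝ} (hm : 0 < m) (hq0 : 0 < qq) (hq1 : qq < 1) (hC : 0 ≤ C) :
    ∃ B : ℝ, 0 ≤ B ∧ ∀ f : ℕ → ℂ, (∀ j, m ≤ ‖f j‖) → (∀ j, ‖f j - 1‖ ≤ C * qq ^ j) →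
      Summable (fun j ↦ Complex.log (f j)) ∧ ‖∑' j, Complex.log (f j)‖ ≤ B ∧
        HasProd f (Complex.exp (∑' j, Complex.log (f j))) := by
  obtain ⟨J, hJ⟩ : ∃ J : ℕ, C * qq ^ J ≤ 1/2 := by
    have h := (tendsto_pow_atTop_nhds_zero_of_lt_one hq0.le hq1).const_mul C
    rw [mul_zero] at h
    have h2 := h.eventually_le_const (show (0:ℝ) < 1/2 by norm_num)
    exact h2.exists
  set Bh := |Real.log m| + |Real.log (1 + C)| + Real.pi with hBhdef
  have hBh0 : 0 ≤ Bh :=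
    add_nonneg (add_nonneg (abs_nonneg _) (abs_nonneg _)) Real.pi_pos.le
  set B2 := max (Bh / qq ^ J) (3/2 * C) with hB2def
  have hB20 : 0 ≤ B2 := le_trans (div_nonneg hBh0 (pow_nonneg hq0.le J)) (le_max_left _ _)
  refine ⟨B2 * (1 - qq)⁻¹, mul_nonneg hB20 (inv_nonneg.mpr (by linarith)), fun f h1 h2 ↦ ?_⟩
  have hne : ∀ j, f j ≠ 0 := by
    intro j h
    have := h1 j
    rw [h, norm_zero] at this
    linarith
  have hlog : ∀ j, ‖Complex.log (f j)‖ ≤ B2 * qq ^ j := by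
    intro j
    rcases le_or_gt J j with hj | hj
    · have hq' : qq ^ j ≤ qq ^ J := pow_le_pow_of_le_one hq0.le hq1.le hj
      have hsmall : ‖f j - 1‖ ≤ 1/2 := (h2 j).trans (by nlinarith)
      have hl := Complex.norm_log_one_add_half_le_self (z := f j - 1) (by simpa using hsmall)
      rw [add_sub_cancel] at hl
      calc ‖Complex.log (f j)‖ ≤ 3/2 * ‖f j - 1‖ := hl
        _ ≤ 3/2 * (C * qq ^ j) := by nlinarith [h2 j]
        _ = (3/2 * C) * qq ^ j := by ring
        _ ≤ B2 * qq ^ j :=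
          mul_le_mul_of_nonneg_right (le_max_right _ _) (pow_nonneg hq0.le j)
    · have hMle : ‖f j‖ ≤ 1 + C := by
        have h3 : ‖f j‖ ≤ ‖f j - 1‖ + 1 := by
          calc ‖f j‖ = ‖f j - 1 + 1‖ := by ring_nf
            _ ≤ ‖f j - 1‖ + ‖(1:ℂ)‖ := norm_add_le _ _
            _ = ‖f j - 1‖ + 1 := by simp
        have h4 : qq ^ j ≤ 1 := pow_le_one₀ hq0.le hq1.le
        nlinarith [h2 j]
      have hcl := norm_clog_le hm (h1 j) hMle
      have hJpow : (0:ℝ) < qq ^ J := pow_pos hq0 J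
      have hjJ : qq ^ J ≤ qq ^ j := pow_le_pow_of_le_one hq0.le hq1.le hj.le
      calc ‖Complex.log (f j)‖ ≤ Bh := hcl
        _ = (Bh / qq ^ J) * qq ^ J := by field_simp
        _ ≤ (Bh / qq ^ J) * qq ^ j :=
          mul_le_mul_of_nonneg_left hjJ (div_nonneg hBh0 hJpow.le)
        _ ≤ B2 * qq ^ j :=
          mul_le_mul_of_nonneg_right (le_max_left _ _) (pow_nonneg hq0.le j)
  exact hasProd_of_logbound hq0.le hq1 hB20 f hne hlog

lemma min_le_add_div_one_add_sq {A B t : ℝ} (hA : 0 ≤ A) (hB : 0 ≤ B) (ht : 0 < t) :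
    min A (B / t ^ 2) ≤ (A + B) / (1 + t ^ 2) := by
  rw [le_div_iff₀ (by positivity)]
  rcases le_total A (B / t ^ 2) with h | h
  · rw [min_eq_left h]
    have hAB : A * t ^ 2 ≤ B := by
      rw [le_div_iff₀ (by positivity)] at h
      linarith
    nlinarith
  · rw [min_eq_right h]
    have hBt : B / t ^ 2 * t ^ 2 = B := by field_simp
    nlinarith [div_nonneg hB (sq_nonneg t)]


noncomputable def Afac (a : ℝ) (w : ℂ) (t : ℝ) : ℂ :=
  (1 - qp a (w + 2 * Complex.I * (t : ℂ))) * (1 - qp a (w - 2 * Complex.I * (t : ℂ)))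

lemma norm_qp (a : ℝ) (w : ℂ) : ‖qp a w‖ = Real.exp (-w.re / a) := by
  rw [qp, Complex.norm_exp]
  congr 1
  simp [Complex.div_ofReal_re]

lemma norm_qp_add (a : ℝ) (w : ℂ) (t : ℝ) :
    ‖qp a (w + 2 * Complex.I * (t : ℂ))‖ = Real.exp (-w.re / a) := by
  rw [norm_qp]
  congr 2
  simp

lemma norm_qp_sub (a : ℝ) (w : ℂ) (t : ℝ) :
    ‖qp a (w - 2 * Complex.I * (t : ℂ))‖ = Real.exp (-w.re / a) := by
  rw [norm_qp]
  congr 2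
  simp

lemma Afac_sub_one_norm {a : ℝ} (w : ℂ) (t : ℝ) {E : ℝ}
    (hE : Real.exp (-w.re / a) ≤ E) (hE1 : E ≤ 1) :
    ‖Afac a w t - 1‖ ≤ 3 * E := by
  have hE0 : 0 ≤ E := le_trans (Real.exp_pos _).le hE
  set u := qp a (w + 2 * Complex.I * (t : ℂ)) with hu
  set v := qp a (w - 2 * Complex.I * (t : ℂ)) with hv
  have hun : ‖u‖ ≤ E := by rw [hu, norm_qp_add]; exact hE
  have hvn : ‖v‖ ≤ E := by rw [hv, norm_qp_sub]; exact hE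
  have key : Afac a w t - 1 = -u - v + u * v := by rw [Afac]; ring
  rw [key]
  calc ‖-u - v + u * v‖ ≤ ‖-u - v‖ + ‖u * v‖ := norm_add_le _ _
    _ ≤ (‖u‖ + ‖v‖) + ‖u‖ * ‖v‖ := by
        rw [norm_mul]
        have : ‖-u - v‖ ≤ ‖u‖ + ‖v‖ := by
          calc ‖-u - v‖ = ‖-(u + v)‖ := by ring_nf
            _ = ‖u + v‖ := norm_neg _
            _ ≤ ‖u‖ + ‖v‖ := norm_add_le _ _
        linarith
    _ ≤ 3 * E := by nlinarith [norm_nonneg u, norm_nonneg v]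

lemma Afac_norm_ge {a : ℝ} (w : ℂ) (t : ℝ) {E : ℝ}
    (hE : Real.exp (-w.re / a) ≤ E) (hE1 : E < 1) :
    (1 - E) ^ 2 ≤ ‖Afac a w t‖ := by
  set u := qp a (w + 2 * Complex.I * (t : ℂ)) with hu
  set v := qp a (w - 2 * Complex.I * (t : ℂ)) with hv
  have hun : ‖u‖ ≤ E := by rw [hu, norm_qp_add]; exact hE
  have hvn : ‖v‖ ≤ E := by rw [hv, norm_qp_sub]; exact hE
  have h1 : (1:ℝ) - E ≤ ‖1 - u‖ := by
    have := norm_sub_norm_le (1 : ℂ) u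
    rw [norm_one] at this
    linarith
  have h2 : (1:ℝ) - E ≤ ‖1 - v‖ := by
    have := norm_sub_norm_le (1 : ℂ) v
    rw [norm_one] at this
    linarith
  rw [Afac, norm_mul]
  nlinarith [norm_nonneg ((1:ℂ) - u), norm_nonneg ((1:ℂ) - v)]

lemma Afac_ne_zero {a : ℝ} (w : ℂ) (t : ℝ) {E : ℝ}
    (hE : Real.exp (-w.re / a) ≤ E) (hE1 : E < 1) :
    Afac a w t ≠ 0 := by
  intro h
  have h2 := Afac_norm_ge w t hE hE1
  rw [h, norm_zero] at h2
  nlinarith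

lemma Afac_ofReal_eq_normSq (a : ℝ) (x : ℝ) (t : ℝ) :
    Afac a ((x : ℝ) : ℂ) t =
      ((Complex.normSq (1 - qp a (((x : ℝ) : ℂ) + 2 * Complex.I * (t : ℂ))) : ℝ) : ℂ) := by
  rw [Afac, ← Complex.mul_conj]
  congr 1
  rw [map_sub, map_one]
  congr 1
  rw [qp, qp, ← Complex.exp_conj]
  congr 1
  rw [map_div₀]
  simp [Complex.conj_ofReal, map_ofNat]
  ring



lemma exp_neg_nat (a : ℝ) (j : ℕ) :
    Real.exp (-(((j : ℕ) : ℂ)).re / a) = Real.exp (-1/a) ^ j := by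
  rw [Complex.natCast_re, ← Real.exp_nat_mul]
  congr 1
  push_cast
  ring

lemma num_ub {a : ℝ} (ha : 0 < a) (j : ℕ) (t : ℝ) :
    ‖Afac a ((j + 1 : ℕ) : ℂ) t - 1‖ ≤ (3 * Real.exp (-1/a)) * Real.exp (-1/a) ^ j := by
  have hq0 : (0:ℝ) < Real.exp (-1/a) := Real.exp_pos _
  have hq1 : Real.exp (-1/a) < 1 := Real.exp_lt_one_iff.mpr (div_neg_of_neg_of_pos (by norm_num) ha)
  have hE := (exp_neg_nat a (j+1)).le
  have := Afac_sub_one_norm ((j + 1 : ℕ) : ℂ) t hE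
    (pow_le_one₀ hq0.le hq1.le)
  calc ‖Afac a ((j + 1 : ℕ) : ℂ) t - 1‖ ≤ 3 * Real.exp (-1/a) ^ (j+1) := this
    _ = (3 * Real.exp (-1/a)) * Real.exp (-1/a) ^ j := by ring

lemma num_lb {a : ℝ} (ha : 0 < a) (j : ℕ) (t : ℝ) :
    (1 - Real.exp (-1/a)) ^ 2 ≤ ‖Afac a ((j + 1 : ℕ) : ℂ) t‖ := by
  have hq0 : (0:ℝ) < Real.exp (-1/a) := Real.exp_pos _
  have hq1 : Real.exp (-1/a) < 1 := Real.exp_lt_one_iff.mpr (div_neg_of_neg_of_pos (by norm_num) ha)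
  apply Afac_norm_ge ((j + 1 : ℕ) : ℂ) t _ hq1
  rw [exp_neg_nat a (j+1)]
  calc Real.exp (-1/a) ^ (j+1) ≤ Real.exp (-1/a) ^ 1 :=
        pow_le_pow_of_le_one hq0.le hq1.le (by omega)
    _ = Real.exp (-1/a) := pow_one _

lemma den_fac {a : ℝ} (ha : 0 < a) {k : ℂ} (hk : 1 ≤ k.re) (j : ℕ) (t : ℝ) :
    Afac a ((j : ℂ) + k) t ≠ 0 ∧
      (1 - Real.exp (-1/a)) ^ 2 ≤ ‖Afac a ((j : ℂ) + k) t‖ ∧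
      ‖(Afac a ((j : ℂ) + k) t)⁻¹ - 1‖ ≤
        (3 * Real.exp (-k.re / a) / (1 - Real.exp (-1/a)) ^ 2) * Real.exp (-1/a) ^ j := by
  set q : ℝ := Real.exp (-1/a) with hqdef
  have hq0 : (0:ℝ) < q := Real.exp_pos _
  have hq1 : q < 1 := Real.exp_lt_one_iff.mpr (div_neg_of_neg_of_pos (by norm_num) ha)
  set ε : ℝ := Real.exp (-k.re / a) with hεdef
  have hε0 : (0:ℝ) < ε := Real.exp_pos _
  have hε1 : ε ≤ q := by
    rw [hεdef, hqdef]
    apply Real.exp_le_exp.mpr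
    have h1 : (1:ℝ)/a ≤ k.re/a := by gcongr
    rw [neg_div, neg_div]
    linarith
  have hEj : Real.exp (-((j:ℂ) + k).re / a) = q ^ j * ε := by
    rw [Complex.add_re, Complex.natCast_re, hεdef, hqdef, ← Real.exp_nat_mul, ← Real.exp_add]
    congr 1
    ring
  have hEq : q ^ j * ε ≤ q := by
    have h1 : q ^ j ≤ 1 := pow_le_one₀ hq0.le hq1.le
    nlinarith
  have hne : Afac a ((j : ℂ) + k) t ≠ 0 :=
    Afac_ne_zero _ t (le_trans hEj.le hEq) hq1
  have hlb : (1 - q) ^ 2 ≤ ‖Afac a ((j : ℂ) + k) t‖ :=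
    Afac_norm_ge _ t (le_trans hEj.le hEq) hq1
  refine ⟨hne, hlb, ?_⟩
  have hub : ‖Afac a ((j : ℂ) + k) t - 1‖ ≤ 3 * (q ^ j * ε) :=
    Afac_sub_one_norm _ t hEj.le (le_trans hEq hq1.le)
  have hkey : (Afac a ((j : ℂ) + k) t)⁻¹ - 1 =
      (1 - Afac a ((j : ℂ) + k) t) * (Afac a ((j : ℂ) + k) t)⁻¹ := by
    field_simp
  rw [hkey, norm_mul, norm_inv, norm_sub_rev]
  have hq' : (0:ℝ) < (1 - q) ^ 2 := pow_pos (by linarith) 2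
  have hinv : ‖Afac a ((j : ℂ) + k) t‖⁻¹ ≤ ((1 - q) ^ 2)⁻¹ :=
    inv_anti₀ hq' hlb
  calc ‖Afac a ((j : ℂ) + k) t - 1‖ * ‖Afac a ((j : ℂ) + k) t‖⁻¹
      ≤ (3 * (q ^ j * ε)) * ((1 - q) ^ 2)⁻¹ := by
        apply mul_le_mul hub hinv (by positivity) (by positivity)
    _ = (3 * ε / (1 - q) ^ 2) * q ^ j := by ring

lemma tdelta_eq (a : ℝ) (k : ℂ) (t : ℝ) :
    tdelta a k (Complex.I * (t : ℂ)) =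
      ∏' j : ℕ, Afac a ((j : ℕ) : ℂ) t / Afac a (((j : ℕ) : ℂ) + k) t := by
  rw [tdelta]
  exact tprod_congr fun j => by simp only [Afac, mul_assoc]



noncomputable def S1f (a : ℝ) (t : ℝ) : ℂ :=
  ∑' j : ℕ, Complex.log (Afac a ((j + 1 : ℕ) : ℂ) t)
noncomputable def Pf (a : ℝ) (t : ℝ) : ℂ := Complex.exp (S1f a t) * Afac a 0 t
noncomputable def S2f (a : ℝ) (k : ℂ) (t : ℝ) : ℂ :=
  ∑' j : ℕ, Complex.log ((Afac a ((j : ℂ) + k) t)⁻¹)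
noncomputable def Qf (a : ℝ) (k : ℂ) (t : ℝ) : ℂ := Complex.exp (S2f a k t)

lemma norm_exp_le (z : ℂ) {B : ℝ} (h : ‖z‖ ≤ B) : ‖Complex.exp z‖ ≤ Real.exp B := by
  rw [Complex.norm_exp]
  apply Real.exp_le_exp.mpr
  calc z.re ≤ ‖z‖ := Complex.re_le_norm z
    _ ≤ B := h

lemma A0_le_four {a : ℝ} (ha : 0 < a) (t : ℝ) : ‖Afac a 0 t‖ ≤ 4 := by
  have h1 : ‖(1:ℂ) - qp a (0 + 2 * Complex.I * (t:ℂ))‖ ≤ 2 := by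
    calc ‖(1:ℂ) - qp a (0 + 2 * Complex.I * (t:ℂ))‖
        ≤ ‖(1:ℂ)‖ + ‖qp a (0 + 2 * Complex.I * (t:ℂ))‖ := norm_sub_le _ _
      _ = 1 + Real.exp (-(0:ℂ).re / a) := by rw [norm_one, norm_qp_add]
      _ = 2 := by norm_num
  have h2 : ‖(1:ℂ) - qp a (0 - 2 * Complex.I * (t:ℂ))‖ ≤ 2 := by
    calc ‖(1:ℂ) - qp a (0 - 2 * Complex.I * (t:ℂ))‖
        ≤ ‖(1:ℂ)‖ + ‖qp a (0 - 2 * Complex.I * (t:ℂ))‖ := norm_sub_le _ _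
      _ = 1 + Real.exp (-(0:ℂ).re / a) := by rw [norm_one, norm_qp_sub]
      _ = 2 := by norm_num
  rw [Afac, norm_mul]
  nlinarith [norm_nonneg ((1:ℂ) - qp a (0 + 2 * Complex.I * (t:ℂ)))]

lemma norm_one_sub_exp_I_mul (c : ℝ) :
    ‖1 - Complex.exp (Complex.I * (c : ℂ))‖ ≤ 2 * |c| := by
  have habs : ‖Complex.I * (c:ℂ)‖ = |c| := by
    rw [norm_mul, Complex.norm_I, Complex.norm_real, Real.norm_eq_abs, one_mul]
  rcases le_or_gt (|c|) 1 with h | h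
  · rw [norm_sub_rev]
    have := Complex.norm_exp_sub_one_le (x := Complex.I * (c:ℂ)) (by rw [habs]; exact h)
    rw [habs] at this
    exact this
  · have hexp : ‖Complex.exp (Complex.I * (c:ℂ))‖ = 1 := by
      rw [Complex.norm_exp]
      simp
    calc ‖1 - Complex.exp (Complex.I * (c:ℂ))‖
        ≤ ‖(1:ℂ)‖ + ‖Complex.exp (Complex.I * (c:ℂ))‖ := norm_sub_le _ _
      _ = 2 := by rw [norm_one, hexp]; norm_num
      _ ≤ 2 * |c| := by nlinarith

lemma A0_le_quad {a : ℝ} (ha : 0 < a) {t : ℝ} (ht : 0 < t) :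
    ‖Afac a 0 t‖ ≤ (4 * t / a) * (4 * t / a) := by
  have ha' : (a:ℂ) ≠ 0 := by exact_mod_cast ha.ne'
  have e1 : -(0 + 2 * Complex.I * (t:ℂ)) / (a:ℂ) = Complex.I * ((-(2*t/a) : ℝ) : ℂ) := by
    rw [show ((-(2*t/a) : ℝ) : ℂ) = ((-(2*t) : ℝ) : ℂ) / (a:ℂ) by push_cast; ring]
    rw [← mul_div_assoc]
    congr 1
    push_cast
    ring
  have e2 : -(0 - 2 * Complex.I * (t:ℂ)) / (a:ℂ) = Complex.I * (((2*t/a) : ℝ) : ℂ) := by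
    rw [show (((2*t/a) : ℝ) : ℂ) = (((2*t) : ℝ) : ℂ) / (a:ℂ) by push_cast; ring]
    rw [← mul_div_assoc]
    congr 1
    push_cast
    ring
  have habs1 : |(-(2*t/a) : ℝ)| = 2*t/a := by
    rw [abs_neg, abs_of_pos (by positivity)]
  have habs2 : |((2*t/a) : ℝ)| = 2*t/a := abs_of_pos (by positivity)
  have h1 : ‖(1:ℂ) - qp a (0 + 2 * Complex.I * (t:ℂ))‖ ≤ 4 * t / a := by
    rw [qp, e1]
    calc ‖1 - Complex.exp (Complex.I * ((-(2*t/a) : ℝ) : ℂ))‖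
        ≤ 2 * |(-(2*t/a) : ℝ)| := norm_one_sub_exp_I_mul _
      _ = 4 * t / a := by rw [habs1]; ring
  have h2 : ‖(1:ℂ) - qp a (0 - 2 * Complex.I * (t:ℂ))‖ ≤ 4 * t / a := by
    rw [qp, e2]
    calc ‖1 - Complex.exp (Complex.I * (((2*t/a) : ℝ) : ℂ))‖
        ≤ 2 * |((2*t/a) : ℝ)| := norm_one_sub_exp_I_mul _
      _ = 4 * t / a := by rw [habs2]; ring
  rw [Afac, norm_mul]
  exact mul_le_mul h1 h2 (norm_nonneg _) (by positivity)

lemma c_eq (a : ℝ) (t : ℝ) :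
    (Complex.exp ((t:ℂ)^2 / (a:ℂ)) - 1)⁻¹ = (((Real.exp (t^2/a) - 1)⁻¹ : ℝ) : ℂ) := by
  rw [show ((t:ℂ)^2/(a:ℂ)) = ((t^2/a : ℝ) : ℂ) by push_cast; ring]
  rw [← Complex.ofReal_exp, ← Complex.ofReal_one, ← Complex.ofReal_sub, ← Complex.ofReal_inv]

lemma c_norm_le {a : ℝ} (ha : 0 < a) {t : ℝ} (ht : 0 < t) :
    ‖(Complex.exp ((t:ℂ)^2 / (a:ℂ)) - 1)⁻¹‖ ≤ a / t^2 ∧ 0 < Real.exp (t^2/a) - 1 := by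
  have hx : 0 < t^2/a := by positivity
  have h1 : 1 < Real.exp (t^2/a) := by
    rw [← Real.exp_zero]
    exact Real.exp_lt_exp.mpr hx
  refine ⟨?_, by linarith⟩
  rw [c_eq, Complex.norm_real, Real.norm_eq_abs, abs_of_pos (inv_pos.mpr (by linarith))]
  have h2 : t^2/a ≤ Real.exp (t^2/a) - 1 := by nlinarith [Real.add_one_le_exp (t^2/a)]
  calc (Real.exp (t^2/a) - 1)⁻¹ ≤ (t^2/a)⁻¹ := inv_anti₀ hx h2
    _ = a/t^2 := inv_div _ _

lemma cP_bound {a : ℝ} (ha : 0 < a) {B₁ : ℝ} {t : ℝ} (ht : 0 < t)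
    (hS1b : ‖S1f a t‖ ≤ B₁) :
    ‖(Complex.exp ((t:ℂ)^2 / (a:ℂ)) - 1)⁻¹ * Pf a t‖ ≤
      (Real.exp B₁ * (16/a + 4*a)) * (1 + t^2)⁻¹ := by
  obtain ⟨hc, hcpos⟩ := c_norm_le ha ht
  have hP : ‖Pf a t‖ ≤ Real.exp B₁ * ‖Afac a 0 t‖ := by
    rw [Pf, norm_mul]
    exact mul_le_mul_of_nonneg_right (norm_exp_le _ hS1b) (norm_nonneg _)
  set c := ‖(Complex.exp ((t:ℂ)^2 / (a:ℂ)) - 1)⁻¹‖ with hcdef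
  have hc0 : 0 ≤ c := norm_nonneg _
  have h4 := A0_le_four ha t
  have hquad := A0_le_quad ha ht
  have hmin : c * ‖Afac a 0 t‖ ≤ min (16/a) ((4*a)/t^2) := by
    rw [le_min_iff]
    constructor
    · calc c * ‖Afac a 0 t‖ ≤ (a/t^2) * ((4*t/a) * (4*t/a)) :=
          mul_le_mul hc hquad (norm_nonneg _) (by positivity)
        _ = 16/a := by field_simp; ring
    · calc c * ‖Afac a 0 t‖ ≤ (a/t^2) * 4 :=
          mul_le_mul hc h4 (norm_nonneg _) (by positivity)
        _ = 4*a/t^2 := by ring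
  have hmin2 := min_le_add_div_one_add_sq (A := 16/a) (B := 4*a) (by positivity) (by positivity) ht
  rw [norm_mul, ← hcdef]
  calc c * ‖Pf a t‖ ≤ c * (Real.exp B₁ * ‖Afac a 0 t‖) :=
        mul_le_mul_of_nonneg_left hP hc0
    _ = Real.exp B₁ * (c * ‖Afac a 0 t‖) := by ring
    _ ≤ Real.exp B₁ * ((16/a + 4*a)/(1+t^2)) :=
        mul_le_mul_of_nonneg_left (le_trans hmin hmin2) (Real.exp_pos _).le
    _ = (Real.exp B₁ * (16/a + 4*a)) * (1+t^2)⁻¹ := by ring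

lemma Q_bounds {a : ℝ} {k : ℂ} {t : ℝ} {σ : ℝ} (hσb : ‖S2f a k t‖ ≤ σ) (hσ : σ ≤ 1/2) :
    ‖Qf a k t‖ ≤ 3 ∧ ‖Qf a k t - 1‖ ≤ 2 * σ := by
  constructor
  · calc ‖Qf a k t‖ ≤ Real.exp σ := norm_exp_le _ hσb
      _ ≤ Real.exp 1 := Real.exp_le_exp.mpr (by linarith)
      _ ≤ 3 := by
          have := Real.exp_one_lt_d9
          linarith
  · rw [Qf]
    have habs : ‖S2f a k t‖ ≤ 1 := by
      linarith
    have := Complex.norm_exp_sub_one_le habs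
    calc ‖Complex.exp (S2f a k t) - 1‖
        ≤ 2 * ‖S2f a k t‖ := this
      _ ≤ 2 * σ := by
          linarith




lemma hasProd_nat_shift {M : Type*} [CommMonoid M] [TopologicalSpace M] [ContinuousMul M]
    {f : ℕ → M} {g : M} (h : HasProd (fun n ↦ f (n + 1)) g) : HasProd f (g * f 0) := by
  have h1 : HasProd (fun j : ℕ ↦ if j = 0 then 1 else f j) g := by
    have hinj : Function.Injective (fun n : ℕ ↦ n + 1) := add_left_injective 1
    have hsupp : ∀ b ∉ Set.range (fun n : ℕ ↦ n + 1),
        (fun j : ℕ ↦ if j = 0 then 1 else f j) b = 1 := by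
      intro b hb
      have hb0 : b = 0 := by
        by_contra hc
        exact hb ⟨b - 1, show b - 1 + 1 = b by omega⟩
      simp [hb0]
    apply (Function.Injective.hasProd_iff hinj hsupp).mp
    have : ((fun j : ℕ ↦ if j = 0 then 1 else f j) ∘ fun n : ℕ ↦ n + 1)
        = fun n ↦ f (n + 1) := funext fun n ↦ by simp
    rw [this]
    exact h
  have h2 : HasProd (fun j : ℕ ↦ if j = 0 then f 0 else 1) (f 0) :=
    hasProd_single 0 (fun b' hb' ↦ by simp [hb'])
  have h3 := h1.mul h2
  have hfun : (fun j : ℕ ↦ (if j = 0 then 1 else f j) * (if j = 0 then f 0 else 1)) = f :=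
    funext fun j ↦ by rcases j with _ | j <;> simp
  rwa [hfun] at h3

lemma P_hasProd {a : ℝ} (ha : 0 < a) :
    ∃ B₁ : ℝ, 0 ≤ B₁ ∧ ∀ t : ℝ,
      ‖S1f a t‖ ≤ B₁ ∧ HasProd (fun j : ℕ ↦ Afac a ((j : ℕ) : ℂ) t) (Pf a t) := by
  have hq0 : (0:ℝ) < Real.exp (-1/a) := Real.exp_pos _
  have hq1 : Real.exp (-1/a) < 1 :=
    Real.exp_lt_one_iff.mpr (div_neg_of_neg_of_pos (by norm_num) ha)
  obtain ⟨B₁, hB₁0, H⟩ := exists_logbound (m := (1 - Real.exp (-1/a))^2)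
    (C := 3 * Real.exp (-1/a)) (qq := Real.exp (-1/a))
    (pow_pos (by linarith) 2) hq0 hq1 (by positivity)
  refine ⟨B₁, hB₁0, fun t ↦ ?_⟩
  obtain ⟨hs, hb, hp⟩ := H (fun j ↦ Afac a ((j + 1 : ℕ) : ℂ) t)
    (fun j ↦ num_lb ha j t) (fun j ↦ num_ub ha j t)
  refine ⟨hb, ?_⟩
  have hp2 := hasProd_nat_shift (f := fun j : ℕ ↦ Afac a ((j : ℕ) : ℂ) t) hp
  have : Pf a t = Complex.exp (S1f a t) * Afac a ((0 : ℕ) : ℂ) t := by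
    rw [Pf, Nat.cast_zero]
  rw [this]
  exact hp2

lemma Q_hasProd {a : ℝ} (ha : 0 < a) {k : ℂ} (hk : 1 ≤ k.re)
    (hsmall : 3 * Real.exp (-k.re / a) / (1 - Real.exp (-1/a)) ^ 2 ≤ 1/2) (t : ℝ) :
    HasProd (fun j : ℕ ↦ (Afac a ((j : ℂ) + k) t)⁻¹) (Qf a k t) ∧
      ‖S2f a k t‖ ≤
        (3/2 * (3 * Real.exp (-k.re / a) / (1 - Real.exp (-1/a)) ^ 2)) *
          (1 - Real.exp (-1/a))⁻¹ := by
  have hq0 : (0:ℝ) < Real.exp (-1/a) := Real.exp_pos _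
  have hq1 : Real.exp (-1/a) < 1 :=
    Real.exp_lt_one_iff.mpr (div_neg_of_neg_of_pos (by norm_num) ha)
  obtain ⟨hs, hb, hp⟩ := small_case hq0.le hq1 (by positivity) hsmall
    (fun j ↦ (Afac a ((j : ℂ) + k) t)⁻¹) (fun j ↦ (den_fac ha hk j t).2.2)
  exact ⟨hp, hb⟩



lemma F_eq {a : ℝ} (ha : 0 < a) {k : ℂ} (hk : 1 ≤ k.re)
    (hsmall : 3 * Real.exp (-k.re / a) / (1 - Real.exp (-1/a)) ^ 2 ≤ 1/2) (t : ℝ)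
    (hPprod : HasProd (fun j : ℕ ↦ Afac a ((j : ℕ) : ℂ) t) (Pf a t)) :
    HasProd (fun j : ℕ ↦ Afac a ((j : ℕ) : ℂ) t / Afac a (((j : ℕ) : ℂ) + k) t)
        (Pf a t * Qf a k t) ∧
      tdelta a k (Complex.I * (t : ℂ)) = Pf a t * Qf a k t := by
  obtain ⟨hQprod, -⟩ := Q_hasProd ha hk hsmall t
  have h := hPprod.mul hQprod
  have hfun : (fun j : ℕ ↦ Afac a ((j : ℕ) : ℂ) t * (Afac a (((j : ℕ) : ℂ) + k) t)⁻¹)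
      = fun j : ℕ ↦ Afac a ((j : ℕ) : ℂ) t / Afac a (((j : ℕ) : ℂ) + k) t :=
    funext fun j ↦ (div_eq_mul_inv _ _).symm
  rw [hfun] at h
  exact ⟨h, by rw [tdelta_eq a k t, h.tprod_eq]⟩

lemma Afac_continuous (a : ℝ) (w : ℂ) : Continuous fun t : ℝ ↦ Afac a w t := by
  unfold Afac qp
  apply Continuous.mul
  · apply Continuous.sub continuous_const
    apply Complex.continuous_exp.comp
    apply Continuous.div_const
    apply Continuous.neg
    exact continuous_const.add (continuous_const.mul Complex.continuous_ofReal)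
  · apply Continuous.sub continuous_const
    apply Complex.continuous_exp.comp
    apply Continuous.div_const
    apply Continuous.neg
    exact continuous_const.sub (continuous_const.mul Complex.continuous_ofReal)

lemma P_real {a : ℝ} (t : ℝ)
    (hPprod : HasProd (fun j : ℕ ↦ Afac a ((j : ℕ) : ℂ) t) (Pf a t)) :
    (Pf a t).im = 0 ∧ 0 ≤ (Pf a t).re := by
  have h := hPprod.tendsto_prod_nat
  have hpart : ∀ n : ℕ, ∏ j ∈ Finset.range n, Afac a ((j : ℕ) : ℂ) t
      = (((∏ j ∈ Finset.range n,
          Complex.normSq (1 - qp a ((((j : ℕ) : ℝ) : ℂ) + 2 * Complex.I * (t : ℂ)))) : ℝ) : ℂ) := by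
    intro n
    rw [Complex.ofReal_prod]
    refine Finset.prod_congr rfl fun j _ ↦ ?_
    rw [show ((j : ℕ) : ℂ) = (((j : ℕ) : ℝ) : ℂ) from (Complex.ofReal_natCast j).symm]
    exact Afac_ofReal_eq_normSq a j t
  constructor
  · have him := (Complex.continuous_im.tendsto (Pf a t)).comp h
    have him2 : Tendsto (fun _ : ℕ ↦ (0 : ℝ)) atTop (𝓝 ((Pf a t).im)) := by
      apply him.congr
      intro n
      show (∏ j ∈ Finset.range n, Afac a ((j : ℕ) : ℂ) t).im = (0 : ℝ)
      rw [hpart n, Complex.ofReal_im]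
    exact tendsto_nhds_unique him2 tendsto_const_nhds
  · have hre := (Complex.continuous_re.tendsto (Pf a t)).comp h
    apply ge_of_tendsto' hre
    intro n
    show 0 ≤ (∏ j ∈ Finset.range n, Afac a ((j : ℕ) : ℂ) t).re
    rw [hpart n, Complex.ofReal_re]
    exact Finset.prod_nonneg fun j _ ↦ Complex.normSq_nonneg _

lemma A0_ne_zero_of_not_mem {a : ℝ} (ha : 0 < a) {t : ℝ}
    (h : t ∉ Set.range (fun n : ℤ ↦ (n : ℝ) * (Real.pi * a))) : Afac a 0 t ≠ 0 := by
  intro h0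
  rw [Afac, mul_eq_zero] at h0
  apply h
  rcases h0 with h1 | h1
  · have h2 : qp a (0 + 2 * Complex.I * (t : ℂ)) = 1 := by
      have := sub_eq_zero.mp h1
      exact this.symm
    rw [qp, Complex.exp_eq_one_iff] at h2
    obtain ⟨n, hn⟩ := h2
    have him := congrArg Complex.im hn
    simp [Complex.div_ofReal_im] at him
    refine ⟨-n, ?_⟩
    push_cast
    have hpi := Real.pi_pos
    field_simp at him
    nlinarith [him]
  · have h2 : qp a (0 - 2 * Complex.I * (t : ℂ)) = 1 := by
      have := sub_eq_zero.mp h1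
      exact this.symm
    rw [qp, Complex.exp_eq_one_iff] at h2
    obtain ⟨n, hn⟩ := h2
    have him := congrArg Complex.im hn
    simp [Complex.div_ofReal_im] at him
    refine ⟨n, ?_⟩
    push_cast
    have hpi := Real.pi_pos
    field_simp at him
    nlinarith [him]




end Stmt9Aux

open Stmt9Aux in
/-- As `k → +∞` along the positive reals, `Z^im_q(k)` converges to
`L = ∫_0^∞ (e^{t²/a}-1)⁻¹ ∏_{j≥0}(1-q^{j+2it})(1-q^{j-2it}) dt`, a strictly positive real
number; in particular `Z^im_q(k)` tends to a nonzero limit as `Re k → +∞`. -/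
theorem stmt9 (a : ℝ) (ha : 0 < a) :
    ∃ L : ℂ,
      L = (∫ t in Set.Ioi (0 : ℝ),
        (Complex.exp ((t : ℂ) ^ 2 / (a : ℂ)) - 1)⁻¹ *
          ∏' j : ℕ, (1 - qp a ((j : ℂ) + 2 * Complex.I * (t : ℂ))) *
            (1 - qp a ((j : ℂ) - 2 * Complex.I * (t : ℂ)))) ∧
      Tendsto (fun k : ℝ => Zim a (k : ℂ)) atTop (𝓝 L) ∧
      L.im = 0 ∧ 0 < L.re ∧
      Tendsto (fun k : ℂ => Zim a k) (Filter.comap Complex.re atTop) (𝓝 L) := by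
  classical
  have hq0 : (0:ℝ) < Real.exp (-1/a) := Real.exp_pos _
  have hq1 : Real.exp (-1/a) < 1 :=
    Real.exp_lt_one_iff.mpr (div_neg_of_neg_of_pos (by norm_num) ha)
  obtain ⟨B₁, hB₁0, hPmain⟩ := P_hasProd ha
  -- constants
  set c1 : ℝ := 3 / (1 - Real.exp (-1/a))^2 with hc1def
  have hc10 : 0 < c1 := div_pos (by norm_num) (pow_pos (by linarith) 2)
  set c3 : ℝ := (3/2 * c1) * (1 - Real.exp (-1/a))⁻¹ with hc3def
  have hc30 : 0 ≤ c3 := by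
    apply mul_nonneg (by positivity)
    exact inv_nonneg.mpr (by linarith)
  set c2 : ℝ := c1 + c3 + 1 with hc2def
  have hc20 : 0 < c2 := by positivity
  set K₀ : ℝ := max 1 (a * Real.log (2 * c2)) with hK₀def
  have hK₀1 : (1:ℝ) ≤ K₀ := le_max_left _ _
  have hK₀ : Real.exp (-K₀/a) * c2 ≤ 1/2 := by
    have h1 : a * Real.log (2*c2) ≤ K₀ := le_max_right _ _
    have h2 : Real.exp (-K₀/a) ≤ (2*c2)⁻¹ := by
      rw [show (2*c2)⁻¹ = Real.exp (-Real.log (2*c2)) by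
        rw [Real.exp_neg, Real.exp_log (by positivity)]]
      apply Real.exp_le_exp.mpr
      rw [neg_div, neg_le_neg_iff]
      rw [le_div_iff₀ ha]
      linarith [h1]
    calc Real.exp (-K₀/a) * c2 ≤ (2*c2)⁻¹ * c2 := mul_le_mul_of_nonneg_right h2 hc20.le
      _ = 1/2 := by field_simp
  have hkfacts : ∀ k : ℂ, K₀ ≤ k.re → 1 ≤ k.re ∧
      3 * Real.exp (-k.re/a) / (1 - Real.exp (-1/a))^2 ≤ 1/2 ∧
      (3/2 * (3 * Real.exp (-k.re/a) / (1 - Real.exp (-1/a))^2)) *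
        (1 - Real.exp (-1/a))⁻¹ ≤ 1/2 := by
    intro k hk
    have hk1 : 1 ≤ k.re := le_trans hK₀1 hk
    have hε : Real.exp (-k.re/a) ≤ Real.exp (-K₀/a) := by
      apply Real.exp_le_exp.mpr
      rw [neg_div, neg_div]
      apply neg_le_neg
      gcongr
    have hε0 : (0:ℝ) < Real.exp (-k.re/a) := Real.exp_pos _
    have hA : Real.exp (-k.re/a) * c2 ≤ 1/2 :=
      le_trans (mul_le_mul_of_nonneg_right hε hc20.le) hK₀
    have he1 : 3 * Real.exp (-k.re/a) / (1 - Real.exp (-1/a))^2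
        = c1 * Real.exp (-k.re/a) := by rw [hc1def]; ring
    refine ⟨hk1, ?_, ?_⟩
    · rw [he1]
      nlinarith [mul_nonneg (by linarith : (0:ℝ) ≤ c3 + 1) hε0.le]
    · rw [he1]
      have he2 : (3/2 * (c1 * Real.exp (-k.re/a))) * (1 - Real.exp (-1/a))⁻¹
          = c3 * Real.exp (-k.re/a) := by rw [hc3def]; ring
      rw [he2]
      nlinarith [mul_nonneg (by linarith : (0:ℝ) ≤ c1 + 1) hε0.le]
  have hev : ∀ᶠ k : ℂ in Filter.comap Complex.re atTop, K₀ ≤ k.re :=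
    tendsto_comap.eventually (eventually_ge_atTop K₀)
  -- measurability of the prefactor
  have hmeas_c : Measurable fun t : ℝ ↦ (Complex.exp ((t:ℂ)^2/(a:ℂ)) - 1)⁻¹ := by
    have heq : (fun t : ℝ ↦ (Complex.exp ((t:ℂ)^2/(a:ℂ)) - 1)⁻¹)
        = fun t : ℝ ↦ (((Real.exp (t^2/a) - 1)⁻¹ : ℝ) : ℂ) := funext fun t ↦ c_eq a t
    rw [heq]
    exact Complex.measurable_ofReal.comp
      ((((measurable_id.pow_const 2).div_const a).exp.sub measurable_const).inv)
  -- a.e.-strong measurability of the integrands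
  have hmeasF : ∀ k : ℂ, K₀ ≤ k.re →
      AEStronglyMeasurable
        (fun t : ℝ ↦ (Complex.exp ((t:ℂ)^2/(a:ℂ)) - 1)⁻¹ * tdelta a k (Complex.I * (t:ℂ)))
        (volume.restrict (Set.Ioi 0)) := by
    intro k hk
    obtain ⟨hk1, hsmall, hσ⟩ := hkfacts k hk
    apply AEStronglyMeasurable.mul hmeas_c.aestronglyMeasurable
    apply aestronglyMeasurable_of_tendsto_ae (u := atTop)
      (f := fun (n : ℕ) (t : ℝ) ↦
        ∏ j ∈ Finset.range n, (Afac a ((j : ℕ) : ℂ) t / Afac a (((j : ℕ) : ℂ) + k) t))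
    · intro n
      apply Continuous.aestronglyMeasurable
      apply continuous_finset_prod
      intro j _
      exact (Afac_continuous a _).div (Afac_continuous a _)
        (fun t ↦ (den_fac ha hk1 j t).1)
    · apply ae_of_all
      intro t
      have hFe := F_eq ha hk1 hsmall t (hPmain t).2
      have h := hFe.1.tendsto_prod_nat
      rw [← hFe.2] at h
      exact h
  have hmeasP : AEStronglyMeasurable
      (fun t : ℝ ↦ (Complex.exp ((t:ℂ)^2/(a:ℂ)) - 1)⁻¹ * Pf a t)
      (volume.restrict (Set.Ioi 0)) := by
    apply AEStronglyMeasurable.mul hmeas_c.aestronglyMeasurable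
    apply aestronglyMeasurable_of_tendsto_ae (u := atTop)
      (f := fun (n : ℕ) (t : ℝ) ↦ ∏ j ∈ Finset.range n, Afac a ((j : ℕ) : ℂ) t)
    · intro n
      apply Continuous.aestronglyMeasurable
      apply continuous_finset_prod
      intro j _
      exact Afac_continuous a _
    · exact ae_of_all _ fun t ↦ (hPmain t).2.tendsto_prod_nat
  -- the dominating function
  have hbound_int : Integrable (fun t : ℝ ↦ (3 * (Real.exp B₁ * (16/a + 4*a))) * (1 + t^2)⁻¹)
      (volume.restrict (Set.Ioi 0)) :=
    (integrable_inv_one_add_sq.const_mul _).restrict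
  have hbd : ∀ k : ℂ, K₀ ≤ k.re → ∀ t ∈ Set.Ioi (0:ℝ),
      ‖(Complex.exp ((t:ℂ)^2/(a:ℂ)) - 1)⁻¹ * tdelta a k (Complex.I * (t:ℂ))‖ ≤
        (3 * (Real.exp B₁ * (16/a + 4*a))) * (1 + t^2)⁻¹ := by
    intro k hk t ht
    obtain ⟨hk1, hsmall, hσ⟩ := hkfacts k hk
    obtain ⟨hQprod, hS2b⟩ := Q_hasProd ha hk1 hsmall t
    have hFe := F_eq ha hk1 hsmall t (hPmain t).2
    rw [hFe.2]
    have hQ3 := (Q_bounds hS2b hσ).1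
    calc ‖(Complex.exp ((t:ℂ)^2/(a:ℂ)) - 1)⁻¹ * (Pf a t * Qf a k t)‖
        = ‖(Complex.exp ((t:ℂ)^2/(a:ℂ)) - 1)⁻¹ * Pf a t‖ * ‖Qf a k t‖ := by
          rw [← norm_mul]; congr 1; ring
      _ ≤ ((Real.exp B₁ * (16/a + 4*a)) * (1+t^2)⁻¹) * 3 := by
          apply mul_le_mul (cP_bound ha ht (hPmain t).1) hQ3 (norm_nonneg _) (by positivity)
      _ = (3 * (Real.exp B₁ * (16/a + 4*a))) * (1 + t^2)⁻¹ := by ring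
  -- pointwise convergence
  have hTε : Tendsto (fun k : ℂ ↦ Real.exp (-k.re/a)) (Filter.comap Complex.re atTop) (𝓝 0) := by
    have h1 : Tendsto Complex.re (Filter.comap Complex.re atTop) atTop := tendsto_comap
    have h2 : Tendsto (fun r : ℝ ↦ -r/a) atTop atBot := by
      have h3 : Tendsto (fun r : ℝ ↦ r/a) atTop atTop :=
        Tendsto.atTop_div_const ha tendsto_id
      have h4 := tendsto_neg_atTop_atBot.comp h3
      apply h4.congr
      intro r
      show -(r/a) = -r/a
      ring
    exact (Real.tendsto_exp_atBot.comp h2).comp h1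
  have hlim : ∀ t : ℝ,
      Tendsto (fun k : ℂ ↦ (Complex.exp ((t:ℂ)^2/(a:ℂ)) - 1)⁻¹ * tdelta a k (Complex.I * (t:ℂ)))
        (Filter.comap Complex.re atTop)
        (𝓝 ((Complex.exp ((t:ℂ)^2/(a:ℂ)) - 1)⁻¹ * Pf a t)) := by
    intro t
    apply tendsto_sub_nhds_zero_iff.mp
    have hb2 : ∀ᶠ k : ℂ in Filter.comap Complex.re atTop,
        ‖(Complex.exp ((t:ℂ)^2/(a:ℂ)) - 1)⁻¹ * tdelta a k (Complex.I * (t:ℂ)) -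
          (Complex.exp ((t:ℂ)^2/(a:ℂ)) - 1)⁻¹ * Pf a t‖ ≤
          (‖(Complex.exp ((t:ℂ)^2/(a:ℂ)) - 1)⁻¹ * Pf a t‖ * (3 * c1 *
            (1 - Real.exp (-1/a))⁻¹)) * Real.exp (-k.re/a) := by
      filter_upwards [hev] with k hk
      obtain ⟨hk1, hsmall, hσ⟩ := hkfacts k hk
      obtain ⟨hQprod, hS2b⟩ := Q_hasProd ha hk1 hsmall t
      have hFe := F_eq ha hk1 hsmall t (hPmain t).2
      rw [hFe.2]
      have hQ1 := (Q_bounds hS2b hσ).2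
      calc ‖(Complex.exp ((t:ℂ)^2/(a:ℂ)) - 1)⁻¹ * (Pf a t * Qf a k t) -
            (Complex.exp ((t:ℂ)^2/(a:ℂ)) - 1)⁻¹ * Pf a t‖
          = ‖(Complex.exp ((t:ℂ)^2/(a:ℂ)) - 1)⁻¹ * Pf a t‖ * ‖Qf a k t - 1‖ := by
            rw [← norm_mul]; congr 1; ring
        _ ≤ ‖(Complex.exp ((t:ℂ)^2/(a:ℂ)) - 1)⁻¹ * Pf a t‖ *
              (2 * ((3/2 * (3 * Real.exp (-k.re/a) / (1 - Real.exp (-1/a))^2)) *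
                (1 - Real.exp (-1/a))⁻¹)) :=
            mul_le_mul_of_nonneg_left hQ1 (norm_nonneg _)
        _ = (‖(Complex.exp ((t:ℂ)^2/(a:ℂ)) - 1)⁻¹ * Pf a t‖ * (3 * c1 *
              (1 - Real.exp (-1/a))⁻¹)) * Real.exp (-k.re/a) := by
            rw [hc1def]; ring
    have hg : Tendsto (fun k : ℂ ↦ (‖(Complex.exp ((t:ℂ)^2/(a:ℂ)) - 1)⁻¹ * Pf a t‖ * (3 * c1 *
        (1 - Real.exp (-1/a))⁻¹)) * Real.exp (-k.re/a)) (Filter.comap Complex.re atTop) (𝓝 0) := by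
      have := hTε.const_mul (‖(Complex.exp ((t:ℂ)^2/(a:ℂ)) - 1)⁻¹ * Pf a t‖ * (3 * c1 *
        (1 - Real.exp (-1/a))⁻¹))
      simpa using this
    exact squeeze_zero_norm' hb2 hg
  -- dominated convergence
  have hDCT := tendsto_integral_filter_of_dominated_convergence
    (μ := volume.restrict (Set.Ioi (0:ℝ))) (l := Filter.comap Complex.re atTop)
    (F := fun (k : ℂ) (t : ℝ) ↦
      (Complex.exp ((t:ℂ)^2/(a:ℂ)) - 1)⁻¹ * tdelta a k (Complex.I * (t:ℂ)))
    (f := fun t : ℝ ↦ (Complex.exp ((t:ℂ)^2/(a:ℂ)) - 1)⁻¹ * Pf a t)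
    (fun t : ℝ ↦ (3 * (Real.exp B₁ * (16/a + 4*a))) * (1 + t^2)⁻¹)
    (hev.mono hmeasF)
    (hev.mono fun k hk ↦ (ae_restrict_iff' measurableSet_Ioi).mpr
      (ae_of_all _ fun t ht ↦ hbd k hk t ht))
    hbound_int
    (ae_of_all _ hlim)
  -- identify the limit integral
  have hint_eq : (∫ t in Set.Ioi (0:ℝ), (Complex.exp ((t:ℂ)^2/(a:ℂ)) - 1)⁻¹ * Pf a t)
      = ∫ t in Set.Ioi (0:ℝ), (Complex.exp ((t:ℂ)^2/(a:ℂ)) - 1)⁻¹ *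
          ∏' j : ℕ, (1 - qp a ((j : ℂ) + 2 * Complex.I * (t : ℂ))) *
            (1 - qp a ((j : ℂ) - 2 * Complex.I * (t : ℂ))) := by
    refine integral_congr_ae (ae_of_all _ fun t ↦ ?_)
    have h5 : (∏' j : ℕ, (1 - qp a ((j : ℂ) + 2 * Complex.I * (t : ℂ))) *
        (1 - qp a ((j : ℂ) - 2 * Complex.I * (t : ℂ)))) = Pf a t := (hPmain t).2.tprod_eq
    beta_reduce
    rw [h5]
  rw [hint_eq] at hDCT
  -- bullet 5 : convergence along `comap re atTop`
  have h5 : Tendsto (fun k : ℂ ↦ Zim a k) (Filter.comap Complex.re atTop)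
      (𝓝 (∫ t in Set.Ioi (0:ℝ), (Complex.exp ((t:ℂ)^2/(a:ℂ)) - 1)⁻¹ *
        ∏' j : ℕ, (1 - qp a ((j : ℂ) + 2 * Complex.I * (t : ℂ))) *
          (1 - qp a ((j : ℂ) - 2 * Complex.I * (t : ℂ))))) := hDCT
  -- bullet 2 : convergence along real k
  have hcoe : Tendsto (fun k : ℝ ↦ (k:ℂ)) atTop (Filter.comap Complex.re atTop) := by
    rw [tendsto_comap_iff]
    have hco : (Complex.re ∘ fun k : ℝ ↦ (k:ℂ)) = id := funext fun k ↦ Complex.ofReal_re k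
    rw [hco]
    exact tendsto_id
  have h2 : Tendsto (fun k : ℝ ↦ Zim a (k:ℂ)) atTop
      (𝓝 (∫ t in Set.Ioi (0:ℝ), (Complex.exp ((t:ℂ)^2/(a:ℂ)) - 1)⁻¹ *
        ∏' j : ℕ, (1 - qp a ((j : ℂ) + 2 * Complex.I * (t : ℂ))) *
          (1 - qp a ((j : ℂ) - 2 * Complex.I * (t : ℂ))))) := h5.comp hcoe
  -- real form of the limit integrand
  have hrealP : ∀ t : ℝ, (Complex.exp ((t:ℂ)^2/(a:ℂ)) - 1)⁻¹ * Pf a t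
      = (((Real.exp (t^2/a) - 1)⁻¹ * (Pf a t).re : ℝ) : ℂ) := by
    intro t
    have him := (P_real t (hPmain t).2).1
    have hPr : Pf a t = (((Pf a t).re : ℝ) : ℂ) := by
      apply Complex.ext
      · simp
      · simp [him]
    rw [c_eq a t]
    conv_lhs => rw [hPr]
    rw [← Complex.ofReal_mul]
  have hreal : ∀ t : ℝ, (Complex.exp ((t:ℂ)^2/(a:ℂ)) - 1)⁻¹ *
      (∏' j : ℕ, (1 - qp a ((j : ℂ) + 2 * Complex.I * (t : ℂ))) *
        (1 - qp a ((j : ℂ) - 2 * Complex.I * (t : ℂ))))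
      = (((Real.exp (t^2/a) - 1)⁻¹ * (Pf a t).re : ℝ) : ℂ) := by
    intro t
    have hAe : (∏' j : ℕ, (1 - qp a ((j : ℂ) + 2 * Complex.I * (t : ℂ))) *
        (1 - qp a ((j : ℂ) - 2 * Complex.I * (t : ℂ)))) = ∏' j : ℕ, Afac a ((j : ℕ) : ℂ) t := rfl
    rw [hAe, (hPmain t).2.tprod_eq]
    exact hrealP t
  -- integrability of the limit integrand
  have hIntC : Integrable (fun t : ℝ ↦ (Complex.exp ((t:ℂ)^2/(a:ℂ)) - 1)⁻¹ * Pf a t)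
      (volume.restrict (Set.Ioi 0)) := by
    apply Integrable.mono' hbound_int hmeasP
    refine (ae_restrict_iff' measurableSet_Ioi).mpr (ae_of_all _ fun t ht ↦ ?_)
    have hE0 : (0:ℝ) ≤ Real.exp B₁ * (16/a + 4*a) := by positivity
    have hi0 : (0:ℝ) ≤ (1+t^2)⁻¹ := by positivity
    calc ‖(Complex.exp ((t:ℂ)^2/(a:ℂ)) - 1)⁻¹ * Pf a t‖
        ≤ (Real.exp B₁ * (16/a + 4*a)) * (1+t^2)⁻¹ := cP_bound ha ht (hPmain t).1
      _ ≤ 3 * (Real.exp B₁ * (16/a + 4*a)) * (1+t^2)⁻¹ := by nlinarith [mul_nonneg hE0 hi0]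
  have hg_int : IntegrableOn (fun t : ℝ ↦ (Real.exp (t^2/a) - 1)⁻¹ * (Pf a t).re)
      (Set.Ioi 0) volume := by
    have h6 := hIntC.re
    apply h6.congr
    refine ae_of_all _ fun t ↦ ?_
    beta_reduce
    rw [hrealP t]
    exact RCLike.ofReal_re _
  have hLr : (∫ t in Set.Ioi (0:ℝ), (Complex.exp ((t:ℂ)^2/(a:ℂ)) - 1)⁻¹ *
      ∏' j : ℕ, (1 - qp a ((j : ℂ) + 2 * Complex.I * (t : ℂ))) *
        (1 - qp a ((j : ℂ) - 2 * Complex.I * (t : ℂ))))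
      = (((∫ t in Set.Ioi (0:ℝ), (Real.exp (t^2/a) - 1)⁻¹ * (Pf a t).re) : ℝ) : ℂ) := by
    have hOR := ContinuousLinearMap.integral_comp_comm Complex.ofRealCLM hg_int
    calc (∫ t in Set.Ioi (0:ℝ), (Complex.exp ((t:ℂ)^2/(a:ℂ)) - 1)⁻¹ *
        ∏' j : ℕ, (1 - qp a ((j : ℂ) + 2 * Complex.I * (t : ℂ))) *
          (1 - qp a ((j : ℂ) - 2 * Complex.I * (t : ℂ))))
        = ∫ t in Set.Ioi (0:ℝ),
            Complex.ofRealCLM ((Real.exp (t^2/a) - 1)⁻¹ * (Pf a t).re) := by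
          refine integral_congr_ae (ae_of_all _ fun t ↦ ?_)
          beta_reduce
          rw [hreal t]
          simp
      _ = Complex.ofRealCLM (∫ t in Set.Ioi (0:ℝ),
            (Real.exp (t^2/a) - 1)⁻¹ * (Pf a t).re) := hOR
      _ = (((∫ t in Set.Ioi (0:ℝ), (Real.exp (t^2/a) - 1)⁻¹ * (Pf a t).re) : ℝ) : ℂ) := by
          simp
  -- nonnegativity of the real integrand
  have hnn : 0 ≤ᵐ[volume.restrict (Set.Ioi (0:ℝ))]
      fun t : ℝ ↦ (Real.exp (t^2/a) - 1)⁻¹ * (Pf a t).re := by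
    refine (ae_restrict_iff' measurableSet_Ioi).mpr (ae_of_all _ fun t ht ↦ ?_)
    have h7 : (0:ℝ) ≤ (Real.exp (t^2/a) - 1)⁻¹ := inv_nonneg.mpr (c_norm_le ha ht).2.le
    exact mul_nonneg h7 (P_real t (hPmain t).2).2
  -- the support has positive measure
  have hpos : 0 < ∫ t in Set.Ioi (0:ℝ), (Real.exp (t^2/a) - 1)⁻¹ * (Pf a t).re := by
    rw [setIntegral_pos_iff_support_of_nonneg_ae hnn hg_int]
    have hZ0 : volume (Set.range (fun n : ℤ ↦ (n:ℝ) * (Real.pi * a))) = 0 :=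
      (Set.countable_range _).measure_zero _
    have hsub : Set.Ioi (0:ℝ) \ Set.range (fun n : ℤ ↦ (n:ℝ) * (Real.pi * a)) ⊆
        Function.support (fun t : ℝ ↦ (Real.exp (t^2/a) - 1)⁻¹ * (Pf a t).re) ∩
          Set.Ioi 0 := by
      rintro t ⟨ht0, htZ⟩
      refine ⟨?_, ht0⟩
      simp only [Function.mem_support]
      have hA0 := A0_ne_zero_of_not_mem ha htZ
      have hPne : Pf a t ≠ 0 := by
        show Complex.exp (S1f a t) * Afac a 0 t ≠ 0
        exact mul_ne_zero (Complex.exp_ne_zero _) hA0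
      have him := (P_real t (hPmain t).2).1
      have hre_ne : (Pf a t).re ≠ 0 := fun h0 ↦
        hPne (by apply Complex.ext <;> simp [h0, him])
      have hcne : (Real.exp (t^2/a) - 1)⁻¹ ≠ 0 := (inv_pos.mpr (c_norm_le ha ht0).2).ne'
      exact mul_ne_zero hcne hre_ne
    refine lt_of_lt_of_le ?_ (measure_mono hsub)
    rw [measure_diff_null hZ0, Real.volume_Ioi]
    simp
  refine ⟨∫ t in Set.Ioi (0:ℝ), (Complex.exp ((t:ℂ)^2/(a:ℂ)) - 1)⁻¹ *
      ∏' j : ℕ, (1 - qp a ((j : ℂ) + 2 * Complex.I * (t : ℂ))) *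
        (1 - qp a ((j : ℂ) - 2 * Complex.I * (t : ℂ))), rfl, h2, ?_, ?_, h5⟩
  · rw [hLr]
    exact Complex.ofReal_im _
  · rw [hLr, Complex.ofReal_re]
    exact hpos
end

section
/- Let a > 0, q = exp(-1/a), and k ∈ ℂ with Re k > 0, and let f : ℂ → ℂ be a function such that t ↦ f(-t²)·μ_k(it;q) and t ↦ f(-t²)·δ_k(it;q) are (Lebesgue) integrable on ℝ. Then ∫_{-∞}^{+∞} f(-t²)·μ_k(it;q) dt = ((1+q^k)/2)·∫_{-∞}^{+∞} f(-t²)·δ_k(it;q) dt. -/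
open Filter Topology MeasureTheory

/-- The asymmetric truncated theta function
`μ_k(x;q) = ∏_{j≥0} ((1-q^{j+2x})(1-q^{j+1-2x}))/((1-q^{j+k+2x})(1-q^{j+k+1-2x}))`. -/
noncomputable def tmu (a : ℝ) (k x : ℂ) : ℂ :=
  ∏' j : ℕ, ((1 - qp a ((j : ℂ) + 2 * x)) * (1 - qp a ((j : ℂ) + 1 - 2 * x))) /
    ((1 - qp a ((j : ℂ) + k + 2 * x)) * (1 - qp a ((j : ℂ) + k + 1 - 2 * x)))


set_option maxHeartbeats 1000000

lemma one_sub_ne_zero_of_norm_lt {w : ℂ} (h : ‖w‖ < 1) : 1 - w ≠ 0 := by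
  intro hw
  rw [sub_eq_zero] at hw
  rw [← hw] at h
  simp at h

lemma M1 (b c : ℕ → ℂ) (r s : ℝ) (hr0 : 0 ≤ r) (hr : r < 1) (hs : s < 1)
    (hb : ∀ j, ‖b j‖ ≤ r ^ j) (hc : ∀ j, ‖c j‖ ≤ r ^ j) (hcs : ∀ j, ‖c j‖ ≤ s)
    (hb0 : ∀ j, 1 - b j ≠ 0) :
    Multipliable fun j => (1 - b j) / (1 - c j) := by
  have hs0 : (0:ℝ) ≤ s := le_trans (norm_nonneg _) (hcs 0)
  have hc0 : ∀ j, 1 - c j ≠ 0 := fun j => one_sub_ne_zero_of_norm_lt ((hcs j).trans_lt hs)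
  have hlow : ∀ j, 1 - s ≤ ‖1 - c j‖ := by
    intro j
    have h1 : ‖(1:ℂ)‖ - ‖c j‖ ≤ ‖1 - c j‖ := norm_sub_norm_le _ _
    have : (1:ℝ) - s ≤ ‖(1:ℂ)‖ - ‖c j‖ := by
      rw [norm_one]; linarith [hcs j]
    linarith
  have hf : ∀ j, ‖(1 - b j) / (1 - c j) - 1‖ ≤ 2 / (1 - s) * r ^ j := by
    intro j
    have he : (1 - b j) / (1 - c j) - 1 = (c j - b j) / (1 - c j) := by
      rw [div_sub_one (hc0 j)]; congr 1; ring
    rw [he, norm_div]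
    have hnum : ‖c j - b j‖ ≤ 2 * r ^ j := by
      calc ‖c j - b j‖ ≤ ‖c j‖ + ‖b j‖ := norm_sub_le _ _
        _ ≤ r ^ j + r ^ j := add_le_add (hc j) (hb j)
        _ = 2 * r ^ j := by ring
    have hden : (0:ℝ) < 1 - s := by linarith
    have hden' : (0:ℝ) < ‖1 - c j‖ := lt_of_lt_of_le hden (hlow j)
    calc ‖c j - b j‖ / ‖1 - c j‖ ≤ (2 * r ^ j) / (1 - s) := by
          apply div_le_div₀ (by positivity) hnum hden (hlow j)
      _ = 2 / (1 - s) * r ^ j := by ring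
  have htend : Tendsto (fun j : ℕ => 2 / (1 - s) * r ^ j) atTop (𝓝 0) := by
    have := tendsto_pow_atTop_nhds_zero_of_norm_lt_one (x := r) (by rwa [Real.norm_of_nonneg hr0])
    simpa using this.const_mul (2 / (1 - s))
  have hsum : Summable fun j : ℕ => Complex.log ((1 - b j) / (1 - c j)) := by
    apply Summable.of_norm_bounded_eventually_nat (g := fun j => 3/2 * (2 / (1 - s) * r ^ j))
    · exact ((summable_geometric_of_lt_one hr0 hr).mul_left _).mul_left _
    · have hev : ∀ᶠ j : ℕ in atTop, 2 / (1 - s) * r ^ j ≤ 1/2 :=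
        htend.eventually_le_const (by norm_num)
      filter_upwards [hev] with j hj
      have hsmall : ‖(1 - b j) / (1 - c j) - 1‖ ≤ 1/2 := le_trans (hf j) hj
      have := Complex.norm_log_one_add_half_le_self hsmall
      rw [add_sub_cancel] at this
      calc ‖Complex.log ((1 - b j) / (1 - c j))‖ ≤ 3/2 * ‖(1 - b j) / (1 - c j) - 1‖ := this
        _ ≤ 3/2 * (2 / (1 - s) * r ^ j) := by
            have := hf j; nlinarith [hf j]
  exact Complex.multipliable_of_summable_log hsum

lemma gen_cancel (P D Cn C0 Cn1 : ℂ) (h1 : Cn ≠ 0) (h2 : C0 ≠ 0) :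
    P * (Cn / C0) * (D * Cn1 / Cn) = P * D * (Cn1 / C0) := by
  field_simp

lemma keyProd (z u v u' v' : ℂ) (hz : ‖z‖ < 1) (hu : ‖u‖ ≤ 1) (hv : ‖v‖ ≤ 1)
    (hu' : ‖u'‖ < 1) (hv' : ‖v'‖ < 1) (hu0 : 1 - u ≠ 0) (hv0 : 1 - v ≠ 0) :
    (∏' j : ℕ, ((1 - u * z ^ j) * (1 - v * z ^ (j+1))) /
        ((1 - u' * z ^ j) * (1 - v' * z ^ (j+1))))
      = (∏' j : ℕ, ((1 - u * z ^ j) * (1 - v * z ^ j)) /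
          ((1 - u' * z ^ j) * (1 - v' * z ^ j))) * ((1 - v') / (1 - v)) := by
  have hz0 : (0:ℝ) ≤ ‖z‖ := norm_nonneg _
  have hz1 : ‖z‖ ≤ 1 := hz.le
  -- norm bounds
  have hbnd : ∀ (w : ℂ), ‖w‖ ≤ 1 → ∀ j : ℕ, ‖w * z ^ j‖ ≤ ‖z‖ ^ j := by
    intro w hw j
    rw [norm_mul, norm_pow]
    calc ‖w‖ * ‖z‖ ^ j ≤ 1 * ‖z‖ ^ j := by
          apply mul_le_mul_of_nonneg_right hw (by positivity)
      _ = ‖z‖ ^ j := one_mul _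
  have hbnd' : ∀ (w : ℂ), ‖w‖ ≤ 1 → ∀ j : ℕ, ‖w * z ^ (j+1)‖ ≤ ‖z‖ ^ j := by
    intro w hw j
    calc ‖w * z ^ (j+1)‖ ≤ ‖z‖ ^ (j+1) := hbnd w hw (j+1)
      _ = ‖z‖ ^ j * ‖z‖ := by ring
      _ ≤ ‖z‖ ^ j * 1 := by apply mul_le_mul_of_nonneg_left hz1 (by positivity)
      _ = ‖z‖ ^ j := mul_one _
  have hbndc : ∀ (w : ℂ), ‖w‖ < 1 → ∀ j : ℕ, ‖w * z ^ j‖ ≤ ‖w‖ := by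
    intro w hw j
    rw [norm_mul, norm_pow]
    calc ‖w‖ * ‖z‖ ^ j ≤ ‖w‖ * 1 := by
          apply mul_le_mul_of_nonneg_left (pow_le_one₀ hz0 hz1) (norm_nonneg _)
      _ = ‖w‖ := mul_one _
  have hn1 : ∀ (w : ℂ), ‖w‖ ≤ 1 → ∀ j : ℕ, 1 - w * z ^ (j+1) ≠ 0 := by
    intro w hw j
    apply one_sub_ne_zero_of_norm_lt
    calc ‖w * z ^ (j+1)‖ ≤ ‖z‖ ^ (j+1) := hbnd w hw (j+1)
      _ < 1 := pow_lt_one₀ hz0 hz (Nat.succ_ne_zero j)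
  have hnu : ∀ j : ℕ, 1 - u * z ^ j ≠ 0 := by
    intro j
    cases j with
    | zero => simpa using hu0
    | succ n => exact hn1 u hu n
  have hnv : ∀ j : ℕ, 1 - v * z ^ j ≠ 0 := by
    intro j
    cases j with
    | zero => simpa using hv0
    | succ n => exact hn1 v hv n
  have hnu' : ∀ j : ℕ, 1 - u' * z ^ j ≠ 0 := fun j =>
    one_sub_ne_zero_of_norm_lt ((hbndc u' hu' j).trans_lt hu')
  have hnv' : ∀ j : ℕ, 1 - v' * z ^ j ≠ 0 := fun j =>
    one_sub_ne_zero_of_norm_lt ((hbndc v' hv' j).trans_lt hv')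
  -- multipliability
  have Md : Multipliable fun j : ℕ => ((1 - u * z ^ j) * (1 - v * z ^ j)) /
      ((1 - u' * z ^ j) * (1 - v' * z ^ j)) := by
    have h1 := M1 (fun j => u * z ^ j) (fun j => u' * z ^ j) ‖z‖ ‖u'‖ hz0 hz hu'
      (hbnd u hu) (hbnd u' hu'.le) (hbndc u' hu') hnu
    have h2 := M1 (fun j => v * z ^ j) (fun j => v' * z ^ j) ‖z‖ ‖v'‖ hz0 hz hv'
      (hbnd v hv) (hbnd v' hv'.le) (hbndc v' hv') hnv
    exact (h1.mul h2).congr fun j => (mul_div_mul_comm _ _ _ _).symm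
  have Mm : Multipliable fun j : ℕ => ((1 - u * z ^ j) * (1 - v * z ^ (j+1))) /
      ((1 - u' * z ^ j) * (1 - v' * z ^ (j+1))) := by
    have h1 := M1 (fun j => u * z ^ j) (fun j => u' * z ^ j) ‖z‖ ‖u'‖ hz0 hz hu'
      (hbnd u hu) (hbnd u' hu'.le) (hbndc u' hu') hnu
    have h2 := M1 (fun j => v * z ^ (j+1)) (fun j => v' * z ^ (j+1)) ‖z‖ ‖v'‖ hz0 hz hv'
      (hbnd' v hv) (hbnd' v' hv'.le) (fun j => hbndc v' hv' (j+1)) (fun j => hn1 v hv j)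
    exact (h1.mul h2).congr fun j => (mul_div_mul_comm _ _ _ _).symm
  -- telescoping
  set C : ℕ → ℂ := fun n => (1 - v * z ^ n) / (1 - v' * z ^ n) with hC
  have hCne : ∀ n, C n ≠ 0 := fun n => div_ne_zero (hnv n) (hnv' n)
  have hstep : ∀ n : ℕ, ((1 - u * z ^ n) * (1 - v * z ^ (n+1))) /
      ((1 - u' * z ^ n) * (1 - v' * z ^ (n+1)))
      = ((1 - u * z ^ n) * (1 - v * z ^ n)) / ((1 - u' * z ^ n) * (1 - v' * z ^ n))
        * C (n+1) / C n := by
    intro n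
    have b1 := hnv n
    have b2 := hnv' n
    have b3 := hnv' (n+1)
    have b4 := hnu' n
    rw [hC]
    simp only
    rw [eq_div_iff (div_ne_zero b1 b2)]
    field_simp
  have htel : ∀ n : ℕ, (∏ j ∈ Finset.range n, ((1 - u * z ^ j) * (1 - v * z ^ (j+1))) /
      ((1 - u' * z ^ j) * (1 - v' * z ^ (j+1))))
      = (∏ j ∈ Finset.range n, ((1 - u * z ^ j) * (1 - v * z ^ j)) /
          ((1 - u' * z ^ j) * (1 - v' * z ^ j))) * (C n / C 0) := by
    intro n
    induction n with
    | zero => simp [div_self (hCne 0)]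
    | succ n ih =>
        rw [Finset.prod_range_succ, Finset.prod_range_succ, ih, hstep n]
        exact gen_cancel _ _ _ _ _ (hCne n) (hCne 0)
  -- limits
  have hzn : Tendsto (fun n : ℕ => z ^ n) atTop (𝓝 0) :=
    tendsto_pow_atTop_nhds_zero_of_norm_lt_one hz
  have hClim : Tendsto C atTop (𝓝 1) := by
    have h1 : Tendsto (fun n : ℕ => 1 - v * z ^ n) atTop (𝓝 (1 - v * 0)) :=
      tendsto_const_nhds.sub ((hzn.const_mul v))
    have h2 : Tendsto (fun n : ℕ => 1 - v' * z ^ n) atTop (𝓝 (1 - v' * 0)) :=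
      tendsto_const_nhds.sub ((hzn.const_mul v'))
    have := h1.div h2 (by simp)
    simpa [hC, Pi.div_def] using this
  have hRHS : Tendsto (fun n : ℕ => (∏ j ∈ Finset.range n,
      ((1 - u * z ^ j) * (1 - v * z ^ j)) / ((1 - u' * z ^ j) * (1 - v' * z ^ j)))
        * (C n / C 0)) atTop
      (𝓝 ((∏' j : ℕ, ((1 - u * z ^ j) * (1 - v * z ^ j)) /
          ((1 - u' * z ^ j) * (1 - v' * z ^ j))) * (1 / C 0))) :=
    (Md.hasProd.tendsto_prod_nat).mul (hClim.div_const (C 0))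
  have hLHS : Tendsto (fun n : ℕ => ∏ j ∈ Finset.range n,
      ((1 - u * z ^ j) * (1 - v * z ^ (j+1))) / ((1 - u' * z ^ j) * (1 - v' * z ^ (j+1))))
      atTop (𝓝 (∏' j : ℕ, ((1 - u * z ^ j) * (1 - v * z ^ (j+1))) /
        ((1 - u' * z ^ j) * (1 - v' * z ^ (j+1))))) :=
    Mm.hasProd.tendsto_prod_nat
  have heq := tendsto_nhds_unique hLHS (hRHS.congr fun n => (htel n).symm)
  rw [heq]
  congr 1
  rw [hC]
  simp only [pow_zero, mul_one]
  rw [one_div_div]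

lemma qp_add (a : ℝ) (w₁ w₂ : ℂ) : qp a (w₁ + w₂) = qp a w₁ * qp a w₂ := by
  rw [qp, qp, qp, ← Complex.exp_add]
  congr 1
  ring

lemma qp_shift (a : ℝ) (j : ℕ) (w : ℂ) : qp a ((j : ℂ) + w) = qp a w * (qp a 1) ^ j := by
  rw [qp, qp, qp, ← Complex.exp_nat_mul, ← Complex.exp_add]
  congr 1
  ring

lemma norm_qp (a : ℝ) (ha : 0 < a) (w : ℂ) : ‖qp a w‖ = Real.exp (-w.re / a) := by
  rw [qp, Complex.norm_exp]
  congr 1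
  rw [Complex.div_ofReal_re, Complex.neg_re]

lemma ratio (a : ℝ) (ha : 0 < a) (k : ℂ) (hk : 0 < k.re) (x : ℂ) (hx : x.re = 0)
    (h1 : 1 - qp a (2 * x) ≠ 0) (h2 : 1 - qp a (-(2 * x)) ≠ 0) :
    tmu a k x = tdelta a k x * ((1 - qp a (k - 2 * x)) / (1 - qp a (-(2 * x)))) := by
  have hx2 : (2 * x).re = 0 := by simp [Complex.mul_re, hx]
  have hz : ‖qp a 1‖ < 1 := by
    rw [norm_qp a ha, Real.exp_lt_one_iff]
    simp only [Complex.one_re]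
    rw [neg_div, neg_lt_zero]
    positivity
  have hu : ‖qp a (2 * x)‖ ≤ 1 := by
    rw [norm_qp a ha, hx2]
    simp
  have hv : ‖qp a (-(2 * x))‖ ≤ 1 := by
    rw [norm_qp a ha]
    simp [hx2]
  have hklt : ∀ w : ℂ, w.re = k.re → ‖qp a w‖ < 1 := by
    intro w hw
    rw [norm_qp a ha, Real.exp_lt_one_iff, hw, neg_div, neg_lt_zero]
    positivity
  have hu' : ‖qp a (k + 2 * x)‖ < 1 := hklt _ (by simp [Complex.add_re, hx2])
  have hv' : ‖qp a (k - 2 * x)‖ < 1 := hklt _ (by simp [Complex.sub_re, hx2])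
  have hmu : ∀ j : ℕ,
      ((1 - qp a ((j : ℂ) + 2 * x)) * (1 - qp a ((j : ℂ) + 1 - 2 * x))) /
        ((1 - qp a ((j : ℂ) + k + 2 * x)) * (1 - qp a ((j : ℂ) + k + 1 - 2 * x)))
      = ((1 - qp a (2 * x) * (qp a 1) ^ j) * (1 - qp a (-(2 * x)) * (qp a 1) ^ (j + 1))) /
        ((1 - qp a (k + 2 * x) * (qp a 1) ^ j) * (1 - qp a (k - 2 * x) * (qp a 1) ^ (j + 1))) := by
    intro j
    rw [show (j : ℂ) + 1 - 2 * x = ((j + 1 : ℕ) : ℂ) + -(2 * x) by push_cast; ring,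
      show (j : ℂ) + k + 2 * x = (j : ℂ) + (k + 2 * x) by ring,
      show (j : ℂ) + k + 1 - 2 * x = ((j + 1 : ℕ) : ℂ) + (k - 2 * x) by push_cast; ring,
      qp_shift, qp_shift, qp_shift, qp_shift]
  have hdel : ∀ j : ℕ,
      ((1 - qp a ((j : ℂ) + 2 * x)) * (1 - qp a ((j : ℂ) - 2 * x))) /
        ((1 - qp a ((j : ℂ) + k + 2 * x)) * (1 - qp a ((j : ℂ) + k - 2 * x)))
      = ((1 - qp a (2 * x) * (qp a 1) ^ j) * (1 - qp a (-(2 * x)) * (qp a 1) ^ j)) /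
        ((1 - qp a (k + 2 * x) * (qp a 1) ^ j) * (1 - qp a (k - 2 * x) * (qp a 1) ^ j)) := by
    intro j
    rw [show (j : ℂ) - 2 * x = (j : ℂ) + -(2 * x) by ring,
      show (j : ℂ) + k + 2 * x = (j : ℂ) + (k + 2 * x) by ring,
      show (j : ℂ) + k - 2 * x = (j : ℂ) + (k - 2 * x) by ring,
      qp_shift, qp_shift, qp_shift, qp_shift]
  rw [tmu, tdelta, tprod_congr hmu, tprod_congr hdel]
  exact keyProd (qp a 1) (qp a (2 * x)) (qp a (-(2 * x))) (qp a (k + 2 * x)) (qp a (k - 2 * x))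
    hz hu hv hu' hv' h1 h2

lemma tdelta_neg (a : ℝ) (k x : ℂ) : tdelta a k (-x) = tdelta a k x := by
  rw [tdelta, tdelta]
  apply tprod_congr
  intro j
  rw [show (j : ℂ) + 2 * (-x) = (j : ℂ) - 2 * x by ring,
    show (j : ℂ) - 2 * (-x) = (j : ℂ) + 2 * x by ring,
    show (j : ℂ) + k + 2 * (-x) = (j : ℂ) + k - 2 * x by ring,
    show (j : ℂ) + k - 2 * (-x) = (j : ℂ) + k + 2 * x by ring]
  ring

lemma sum_eq (a : ℝ) (ha : 0 < a) (k : ℂ) (hk : 0 < k.re) (x : ℂ) (hx : x.re = 0)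
    (hgood : qp a (2 * x) ≠ 1) :
    tmu a k x + tmu a k (-x) = (1 + qp a k) * tdelta a k x := by
  have huv : qp a (2 * x) * qp a (-(2 * x)) = 1 := by
    rw [← qp_add]
    simp [qp]
  have hgood' : qp a (-(2 * x)) ≠ 1 := by
    intro h
    rw [h, mul_one] at huv
    exact hgood huv
  have h1 : 1 - qp a (2 * x) ≠ 0 := sub_ne_zero_of_ne (Ne.symm hgood)
  have h2 : 1 - qp a (-(2 * x)) ≠ 0 := sub_ne_zero_of_ne (Ne.symm hgood')
  have r1 := ratio a ha k hk x hx h1 h2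
  have r2 := ratio a ha k hk (-x) (by simp [hx])
    (by rw [show 2 * (-x) = -(2 * x) by ring]; exact h2)
    (by rw [show -(2 * (-x)) = 2 * x by ring]; exact h1)
  rw [show (2 : ℂ) * (-x) = -(2 * x) by ring, show -(-(2*x)) = 2*x by ring,
    show k - -(2 * x) = k + 2 * x by ring] at r2
  rw [r1, r2, tdelta_neg]
  have hq1 : qp a (k - 2 * x) = qp a k * qp a (-(2*x)) := by
    rw [show k - 2*x = k + -(2*x) by ring, qp_add]
  have hq2 : qp a (k + 2 * x) = qp a k * qp a (2*x) := qp_add a k (2*x)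
  rw [hq1, hq2]
  set D := tdelta a k x
  set u := qp a (2 * x)
  set v := qp a (-(2 * x))
  set qk := qp a k
  field_simp
  linear_combination (D * ((qk + qk^2) * (u + v) - (qk + qk^2) * (u * v) - qk^2 - 1) + D * (qk + qk^2) * (u * v + 1 - u - v)) * huv

/-- Symmetrization relation: `∫_{-i∞}^{i∞} f(x²)μ_k dx = ((1+q^k)/2)∫_{-i∞}^{i∞} f(x²)δ_k dx`,
written with `x = it`. -/
theorem stmt14 (a : ℝ) (ha : 0 < a) (k : ℂ) (hk : 0 < k.re) (f : ℂ → ℂ)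
    (h1 : Integrable (fun t : ℝ => f (-(t : ℂ) ^ 2) * tmu a k (Complex.I * (t : ℂ))))
    (h2 : Integrable (fun t : ℝ => f (-(t : ℂ) ^ 2) * tdelta a k (Complex.I * (t : ℂ)))) :
    ∫ t : ℝ, f (-(t : ℂ) ^ 2) * tmu a k (Complex.I * (t : ℂ)) =
      ((1 + qp a k) / 2) * ∫ t : ℝ, f (-(t : ℂ) ^ 2) * tdelta a k (Complex.I * (t : ℂ)) := by
  have ha' : (a : ℂ) ≠ 0 := by exact_mod_cast ha.ne'
  -- the bad set is null
  have hsub : {t : ℝ | qp a (2 * (Complex.I * (t : ℂ))) = 1} ⊆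
      Set.range (fun n : ℤ => -(Real.pi * a * (n : ℝ))) := by
    intro t ht
    simp only [Set.mem_setOf_eq, qp] at ht
    rw [Complex.exp_eq_one_iff] at ht
    obtain ⟨n, hn⟩ := ht
    have hn' : -(2 * (Complex.I * (t : ℂ))) = (n : ℂ) * (2 * Real.pi * Complex.I) * a := by
      field_simp at hn
      linear_combination (2 * Complex.I) * hn
    have h3 : (t : ℂ) = ((-(Real.pi * a * (n : ℝ)) : ℝ) : ℂ) := by
      apply mul_left_cancel₀ (show (-2 : ℂ) * Complex.I ≠ 0 by
        simp [Complex.I_ne_zero])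
      push_cast
      linear_combination hn'
    exact ⟨n, (Complex.ofReal_inj.mp h3).symm⟩
  have hnull : (volume : Measure ℝ) {t : ℝ | qp a (2 * (Complex.I * (t : ℂ))) = 1} = 0 :=
    measure_mono_null hsub ((Set.countable_range _).measure_zero _)
  have hae : ∀ᵐ t : ℝ, qp a (2 * (Complex.I * (t : ℂ))) ≠ 1 := by
    rw [ae_iff]
    convert hnull using 2
    simp [not_not]
  have hkey : ∀ᵐ t : ℝ,
      f (-(t : ℂ) ^ 2) * tmu a k (Complex.I * (t : ℂ)) +
        f (-(t : ℂ) ^ 2) * tmu a k (-(Complex.I * (t : ℂ)))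
      = (1 + qp a k) * (f (-(t : ℂ) ^ 2) * tdelta a k (Complex.I * (t : ℂ))) := by
    filter_upwards [hae] with t ht
    have hs := sum_eq a ha k hk (Complex.I * (t : ℂ)) (by simp) ht
    calc f (-(t : ℂ) ^ 2) * tmu a k (Complex.I * (t : ℂ)) +
          f (-(t : ℂ) ^ 2) * tmu a k (-(Complex.I * (t : ℂ)))
        = f (-(t : ℂ) ^ 2) * (tmu a k (Complex.I * (t : ℂ)) +
            tmu a k (-(Complex.I * (t : ℂ)))) := by ring
      _ = f (-(t : ℂ) ^ 2) * ((1 + qp a k) * tdelta a k (Complex.I * (t : ℂ))) := by rw [hs]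
      _ = (1 + qp a k) * (f (-(t : ℂ) ^ 2) * tdelta a k (Complex.I * (t : ℂ))) := by ring
  -- integrability of the reflected integrand
  have hneg : Integrable (fun t : ℝ => f (-(t : ℂ) ^ 2) * tmu a k (-(Complex.I * (t : ℂ)))) := by
    apply h1.comp_neg.congr
    apply Eventually.of_forall
    intro t
    simp [Complex.ofReal_neg, neg_sq, mul_neg]
  -- reflection identity for the integral
  have e1 : (∫ t : ℝ, f (-(t : ℂ) ^ 2) * tmu a k (Complex.I * (t : ℂ)))
      = ∫ t : ℝ, f (-(t : ℂ) ^ 2) * tmu a k (-(Complex.I * (t : ℂ))) := by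
    rw [← integral_neg_eq_self
      (fun t : ℝ => f (-(t : ℂ) ^ 2) * tmu a k (-(Complex.I * (t : ℂ)))) volume]
    congr 1
    funext t
    simp [Complex.ofReal_neg, neg_sq, mul_neg]
  have e2 : (∫ t : ℝ, (f (-(t : ℂ) ^ 2) * tmu a k (Complex.I * (t : ℂ)) +
        f (-(t : ℂ) ^ 2) * tmu a k (-(Complex.I * (t : ℂ)))))
      = (∫ t : ℝ, f (-(t : ℂ) ^ 2) * tmu a k (Complex.I * (t : ℂ))) +
        ∫ t : ℝ, f (-(t : ℂ) ^ 2) * tmu a k (-(Complex.I * (t : ℂ))) :=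
    integral_add h1 hneg
  have e3 : (∫ t : ℝ, (f (-(t : ℂ) ^ 2) * tmu a k (Complex.I * (t : ℂ)) +
        f (-(t : ℂ) ^ 2) * tmu a k (-(Complex.I * (t : ℂ)))))
      = ∫ t : ℝ, (1 + qp a k) * (f (-(t : ℂ) ^ 2) * tdelta a k (Complex.I * (t : ℂ))) :=
    integral_congr_ae hkey
  have e4 : (∫ t : ℝ, (1 + qp a k) * (f (-(t : ℂ) ^ 2) * tdelta a k (Complex.I * (t : ℂ))))
      = (1 + qp a k) * ∫ t : ℝ, f (-(t : ℂ) ^ 2) * tdelta a k (Complex.I * (t : ℂ)) :=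
    integral_const_mul _ _
  have e5 : (∫ t : ℝ, f (-(t : ℂ) ^ 2) * tmu a k (Complex.I * (t : ℂ))) +
      (∫ t : ℝ, f (-(t : ℂ) ^ 2) * tmu a k (Complex.I * (t : ℂ)))
      = (1 + qp a k) * ∫ t : ℝ, f (-(t : ℂ) ^ 2) * tdelta a k (Complex.I * (t : ℂ)) := by
    nth_rewrite 2 [e1]
    rw [← e2, e3, e4]
  linear_combination (1/2 : ℂ) * e5
end
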